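/- Let G be a finite p-stable group with C_G(O_p(G)) ≤ O_p(G), let P be a Sylow p-subgroup of G, and let A be an abelian normal subgroup of P. Then A ≤ O_p(G). -/

import Mathlib

open Subgroup
open scoped commutatorElement

/-- The `p`-core `O_p(G)`: the largest normal `p`-subgroup of `G`. -/
noncomputable def pCore (p : ℕ) (G : Type*) [Group G] : Subgroup G :=
  ⨆ N ∈ {N : Subgroup G | N.Normal ∧ IsPGroup p N}, N

instance centralizer_subgroupOf_normalizer_normal {G : Type*} [Group G] (Q : Subgroup G) :
    ((Subgroup.centralizer (Q : Set G)).subgroupOf (Subgroup.normalizer (Q : Set G))).Normal :=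
  Q.normalizerMonoidHom_ker ▸ Q.normalizerMonoidHom.normal_ker

/-- `G` is `p`-stable: whenever `Q` is a `p`-subgroup, `g ∈ N_G(Q)` and `[Q,g,g] = 1`,
the coset `g C_G(Q)` lies in `O_p(N_G(Q)/C_G(Q))`. -/
def IsPStable (p : ℕ) (G : Type*) [Group G] : Prop :=
  ∀ (Q : Subgroup G), IsPGroup p Q → ∀ (g : G) (hg : g ∈ (Subgroup.normalizer (Q : Set G))),
    (∀ q ∈ Q, ⁅⁅q, g⁆, g⁆ = 1) →
    (QuotientGroup.mk (s := (Subgroup.centralizer (Q : Set G)).subgroupOf (Subgroup.normalizer (Q : Set G)))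
        ⟨g, hg⟩) ∈
      pCore p ((Subgroup.normalizer (Q : Set G)) ⧸ (Subgroup.centralizer (Q : Set G)).subgroupOf (Subgroup.normalizer (Q : Set G)))

/-- `G` is `p`-nilpotent: it has a normal `p`-complement, i.e. a normal subgroup of order
coprime to `p` which is a complement to a Sylow `p`-subgroup. -/
def IsPNilpotent (p : ℕ) (G : Type*) [Group G] : Prop :=
  ∃ N : Subgroup G, N.Normal ∧ (Nat.card N).Coprime p ∧
    ∃ P : Sylow p G, N.IsComplement' P

/-- `D` is strongly closed in `P` with respect to `G`. -/
def IsStronglyClosed {G : Type*} [Group G] (P D : Subgroup G) : Prop :=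
  ∀ U : Set G, U ⊆ (D : Set G) → ∀ g : G,
    (fun u => g⁻¹ * u * g) '' U ⊆ (P : Set G) → (fun u => g⁻¹ * u * g) '' U ⊆ (D : Set G)

open Classical in
/-- `I_𝒜 = ⋂_{A ∈ 𝒜} A`, with the convention that `I_∅` is the trivial subgroup. -/
noncomputable def interA {G : Type*} [Group G] (𝒜 : Set (Subgroup G)) : Subgroup G :=
  if 𝒜 = ∅ then ⊥ else sInf 𝒜

/-- `𝒜|Q`, the members of `𝒜` contained in `Q`. -/
def restrictA {G : Type*} [Group G] (𝒜 : Set (Subgroup G)) (Q : Subgroup G) :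
    Set (Subgroup G) := {A ∈ 𝒜 | A ≤ Q}

/-- `A^b = b⁻¹ A b`. -/
def conjSub {G : Type*} [Group G] (A : Subgroup G) (b : G) : Subgroup G :=
  A.map (MulAut.conj b⁻¹).toMonoidHom

/-- `[A, b]`, the subgroup generated by the commutators `⁅a, b⁆` with `a ∈ A`. -/
def commSub {G : Type*} [Group G] (A : Subgroup G) (b : G) : Subgroup G :=
  Subgroup.closure {x | ∃ a ∈ A, x = ⁅a, b⁆}

theorem pCore_spec (p : ℕ) (G : Type*) [Group G] [Finite G] :
    (pCore p G).Normal ∧ IsPGroup p (pCore p G) := by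
  have key : ∀ T : Set (Subgroup G), T.Finite →
      T ⊆ {N : Subgroup G | N.Normal ∧ IsPGroup p N} →
      ((⨆ N ∈ T, N : Subgroup G).Normal ∧ IsPGroup p (⨆ N ∈ T, N : Subgroup G)) := by
    intro T hT
    refine Set.Finite.induction_on
      (motive := fun T _ => T ⊆ {N : Subgroup G | N.Normal ∧ IsPGroup p N} →
        ((⨆ N ∈ T, N : Subgroup G).Normal ∧ IsPGroup p (⨆ N ∈ T, N : Subgroup G)))
      T hT ?_ ?_
    · intro _
      have h0 : (⨆ N ∈ (∅ : Set (Subgroup G)), N) = (⊥ : Subgroup G) := by simp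
      rw [h0]
      exact ⟨inferInstance, IsPGroup.of_bot⟩
    · intro a T haT hTfin ih hsub
      have h1 : (⨆ N ∈ insert a T, N) = a ⊔ ⨆ N ∈ T, N := by rw [iSup_insert]
      rw [h1]
      have ha := hsub (Set.mem_insert _ _)
      have ih' := ih (fun x hx => hsub (Set.mem_insert_of_mem _ hx))
      haveI := ha.1
      haveI := ih'.1
      exact ⟨inferInstance, ha.2.to_sup_of_normal_right ih'.2⟩
  exact key _ (Set.toFinite _) le_rfl

theorem le_pCore' {p : ℕ} {G : Type*} [Group G] {N : Subgroup G}
    (h1 : N.Normal) (h2 : IsPGroup p N) : N ≤ pCore p G :=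
  le_iSup₂ (f := fun (N : Subgroup G) (_ : N ∈ {N : Subgroup G | N.Normal ∧ IsPGroup p N}) => N)
    N ⟨h1, h2⟩

theorem normal_pgroup_le_sylow {p : ℕ} (hp : p.Prime) {G : Type*} [Group G] [Finite G]
    {Q : Subgroup G} (hQn : Q.Normal) (hQ : IsPGroup p Q) (P : Sylow p G) : Q ≤ P := by
  haveI : Fact p.Prime := ⟨hp⟩
  obtain ⟨R, hR⟩ := hQ.exists_le_sylow
  obtain ⟨g, hg⟩ := MulAction.exists_smul_eq G R P
  intro q hq
  rw [← hg]
  have : q ∈ (↑(g • R) : Set G) := by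
    rw [Sylow.coe_smul]
    exact Set.mem_smul_set.mpr ⟨g⁻¹ * q * g, hR (by simpa using hQn.conj_mem q hq g⁻¹), by
      simp [MulAut.conj]; group⟩
  exact this


/-- Let `G` be a finite `p`-stable group with `C_G(O_p(G)) ≤ O_p(G)`, let
`P` be a Sylow `p`-subgroup of `G`, and let `A` be an abelian normal subgroup of `P`.
Then `A ≤ O_p(G)`. -/
theorem abelian_normal_in_sylow_le_pCore
    {p : ℕ} (hp : p.Prime) {G : Type*} [Group G] [Finite G]
    (hstable : IsPStable p G)
    (hC : Subgroup.centralizer ((pCore p G : Subgroup G) : Set G) ≤ pCore p G)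
    (P : Sylow p G) (A : Subgroup G) (hA : IsMulCommutative A)
    (hAP : A ≤ (P : Subgroup G)) (hAnorm : (P : Subgroup G) ≤ (Subgroup.normalizer (A : Set G))) :
    A ≤ pCore p G := by
  obtain ⟨hQn, hQp⟩ := pCore_spec p G
  have hQtop : (normalizer ((pCore p G : Subgroup G) : Set G)) = ⊤ := Subgroup.normalizer_eq_top_iff.mpr hQn
  have hQleP : pCore p G ≤ (P : Subgroup G) := normal_pgroup_le_sylow hp hQn hQp P
  have hcent_le_N : Subgroup.centralizer ((pCore p G : Subgroup G) : Set G) ≤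
      (normalizer ((pCore p G : Subgroup G) : Set G)) := by rw [hQtop]; exact le_top
  have hCp : IsPGroup p
      ((Subgroup.centralizer ((pCore p G : Subgroup G) : Set G)).subgroupOf
        (normalizer ((pCore p G : Subgroup G) : Set G))) :=
    (hQp.to_le hC).of_equiv (Subgroup.subgroupOfEquivOfLe hcent_le_N).symm
  obtain ⟨hq_n, hq_p⟩ := pCore_spec p ((normalizer ((pCore p G : Subgroup G) : Set G)) ⧸
    (Subgroup.centralizer ((pCore p G : Subgroup G) : Set G)).subgroupOf (normalizer ((pCore p G : Subgroup G) : Set G)))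
  set H : Subgroup (normalizer ((pCore p G : Subgroup G) : Set G)) :=
    (pCore p ((normalizer ((pCore p G : Subgroup G) : Set G)) ⧸
      (Subgroup.centralizer ((pCore p G : Subgroup G) : Set G)).subgroupOf
        (normalizer ((pCore p G : Subgroup G) : Set G)))).comap
      (QuotientGroup.mk'
        ((Subgroup.centralizer ((pCore p G : Subgroup G) : Set G)).subgroupOf
          (normalizer ((pCore p G : Subgroup G) : Set G)))) with hHdef
  have hHp : IsPGroup p H :=
    hq_p.comap_of_ker_isPGroup _ (by rw [QuotientGroup.ker_mk']; exact hCp)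
  have hHn : H.Normal := hq_n.comap _
  have hH'p : IsPGroup p (H.map (normalizer ((pCore p G : Subgroup G) : Set G)).subtype) := hHp.map _
  have hH'n : (H.map (normalizer ((pCore p G : Subgroup G) : Set G)).subtype).Normal := by
    refine ⟨fun x hx g => ?_⟩
    obtain ⟨y, hy, rfl⟩ := Subgroup.mem_map.mp hx
    have hgN : g ∈ (normalizer ((pCore p G : Subgroup G) : Set G)) := by rw [hQtop]; exact Subgroup.mem_top g
    exact Subgroup.mem_map.mpr ⟨⟨g, hgN⟩ * y * ⟨g, hgN⟩⁻¹, hHn.conj_mem y hy ⟨g, hgN⟩, rfl⟩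
  have hH'le : H.map (normalizer ((pCore p G : Subgroup G) : Set G)).subtype ≤ pCore p G := le_pCore' hH'n hH'p
  intro a ha
  have haN : a ∈ (normalizer ((pCore p G : Subgroup G) : Set G)) := by rw [hQtop]; exact Subgroup.mem_top a
  have hcomm : ∀ q ∈ pCore p G, ⁅⁅q, a⁆, a⁆ = 1 := by
    intro q hq
    have hqP : q ∈ (P : Subgroup G) := hQleP hq
    have hqa_mem : ⁅q, a⁆ ∈ A := by
      rw [commutatorElement_def]
      exact mul_mem ((Subgroup.mem_normalizer_iff.mp (hAnorm hqP) a).mp ha) (inv_mem ha)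
    exact commutatorElement_eq_one_iff_mul_comm.mpr
      (Subgroup.mul_comm_of_mem_isMulCommutative A hqa_mem ha)
  have hmk := hstable (pCore p G) hQp a haN hcomm
  have haH : (⟨a, haN⟩ : (normalizer ((pCore p G : Subgroup G) : Set G))) ∈ H := by
    rw [hHdef, Subgroup.mem_comap]
    exact hmk
  exact hH'le (Subgroup.mem_map.mpr ⟨⟨a, haN⟩, haH, rfl⟩)
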